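/- A subset Ψ ⊆ Φ is a good root subsystem of Φ if and only if Ψ is a maximal element, with respect to inclusion, of the collection of proper parabolic root subsystems of Φ, where a parabolic root subsystem of Φ is a subset of the form Span_ℚ(S) ∩ Φ for some S ⊆ Φ. -/

import Mathlib

open scoped Classical
noncomputable section

/-- A reduced crystallographic root system spanning `E`. -/
def IsRootSystem {E : Type*} [AddCommGroup E] [Module ℚ E] (Φ : Set E) : Prop :=
  Φ.Finite ∧ (0 : E) ∉ Φ ∧ Submodule.span ℚ Φ = ⊤ ∧ (∀ α ∈ Φ, -α ∈ Φ) ∧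
    (∀ α ∈ Φ, ∃ f : E →ₗ[ℚ] ℚ, f α = 2 ∧ (∀ β ∈ Φ, ∃ n : ℤ, f β = (n : ℚ)) ∧
      ∀ β ∈ Φ, β - f β • α ∈ Φ) ∧
    ∀ α ∈ Φ, ∀ c : ℚ, c • α ∈ Φ → c = 1 ∨ c = -1

/-- `Ψ` is a closed root subsystem of `Θ`. -/
def IsClosedSub {E : Type*} [AddCommGroup E] (Θ Ψ : Set E) : Prop :=
  Ψ ⊆ Θ ∧ (∀ l ∈ Ψ, -l ∈ Ψ) ∧ ∀ l ∈ Ψ, ∀ m ∈ Ψ, l + m ∈ Θ → l + m ∈ Ψ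

/-- The rank of a subset: the dimension of its `ℚ`-linear span. -/
def rankOf {E : Type*} [AddCommGroup E] [Module ℚ E] (Ψ : Set E) : ℕ :=
  Module.finrank ℚ (Submodule.span ℚ Ψ)

/-- `Ψ` is a maximal closed root subsystem of `Θ` of rank `m`. -/
def IsMaxClosedOfRank {E : Type*} [AddCommGroup E] [Module ℚ E] (Θ Ψ : Set E) (m : ℕ) : Prop :=
  IsClosedSub Θ Ψ ∧ rankOf Ψ = m ∧
    ∀ Ψ' : Set E, IsClosedSub Θ Ψ' → rankOf Ψ' = m → Ψ ⊆ Ψ' → Ψ' = Ψ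


/-- A parabolic root subsystem of `Φ`: a subset of the form `Span_ℚ(S) ∩ Φ`
for some `S ⊆ Φ`. -/
def IsParabolic {E : Type*} [AddCommGroup E] [Module ℚ E] (Φ Ψ : Set E) : Prop :=
  ∃ S : Set E, S ⊆ Φ ∧ Ψ = (Submodule.span ℚ S : Set E) ∩ Φ

/-- The intersection of a subspace with `Φ` is a closed root subsystem. -/
lemma aux_closed_of_inter {E : Type*} [AddCommGroup E] [Module ℚ E]
    (Φ : Set E) (hneg : ∀ α ∈ Φ, -α ∈ Φ) (p : Submodule ℚ E) :
    IsClosedSub Φ ((p : Set E) ∩ Φ) := by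
  refine ⟨Set.inter_subset_right, ?_, ?_⟩
  · rintro l ⟨hl, hlΦ⟩
    exact ⟨p.neg_mem hl, hneg l hlΦ⟩
  · rintro l ⟨hl, -⟩ m ⟨hm, -⟩ hΦ
    exact ⟨p.add_mem hl hm, hΦ⟩

/-- The span of `(span S) ∩ Φ` is `span S` when `S ⊆ Φ`. -/
lemma aux_span_inter {E : Type*} [AddCommGroup E] [Module ℚ E]
    {Φ S : Set E} (hS : S ⊆ Φ) :
    Submodule.span ℚ ((Submodule.span ℚ S : Set E) ∩ Φ) = Submodule.span ℚ S := by
  apply le_antisymm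
  · rw [Submodule.span_le]; exact Set.inter_subset_left
  · apply Submodule.span_le.2
    intro x hx
    exact Submodule.subset_span ⟨Submodule.subset_span hx, hS hx⟩

theorem statement10 {E : Type*} [AddCommGroup E] [Module ℚ E] [FiniteDimensional ℚ E]
    (hr : 1 ≤ Module.finrank ℚ E)
    (Φ : Set E) (hΦ : IsRootSystem Φ) (Ψ : Set E) :
    IsMaxClosedOfRank Φ Ψ (Module.finrank ℚ E - 1) ↔
      (IsParabolic Φ Ψ ∧ Ψ ≠ Φ ∧
        ∀ Ψ' : Set E, IsParabolic Φ Ψ' → Ψ' ≠ Φ → Ψ ⊆ Ψ' → Ψ' = Ψ) := by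
  obtain ⟨hfin, h0, hspan, hneg, -, -⟩ := hΦ
  set r := Module.finrank ℚ E with hrdef
  -- generic facts
  have hsub_lt : ∀ {p : Submodule ℚ E}, p ≠ ⊤ → Module.finrank ℚ p < r := by
    intro p hp
    exact Submodule.finrank_lt hp
  have hrm1 : r - 1 < r := Nat.sub_lt (by omega) one_pos
  -- a parabolic set whose defining span is not ⊤ is closed, of rank = dim of span
  constructor
  · rintro ⟨hclosed, hrank, hmax⟩
    -- first show Ψ = span Ψ ∩ Φ
    have hΨsub : Ψ ⊆ Φ := hclosed.1
    have hpara : Ψ = (Submodule.span ℚ Ψ : Set E) ∩ Φ := by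
      have h2 : IsClosedSub Φ ((Submodule.span ℚ Ψ : Set E) ∩ Φ) :=
        aux_closed_of_inter Φ hneg _
      have hsp : Submodule.span ℚ ((Submodule.span ℚ Ψ : Set E) ∩ Φ) = Submodule.span ℚ Ψ :=
        aux_span_inter hΨsub
      have hsub : Ψ ⊆ (Submodule.span ℚ Ψ : Set E) ∩ Φ := fun x hx =>
        ⟨Submodule.subset_span hx, hΨsub hx⟩
      have := hmax _ h2 (by rw [rankOf, hsp]; exact hrank) hsub
      exact this.symm
    refine ⟨⟨Ψ, hΨsub, hpara⟩, ?_, ?_⟩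
    · -- Ψ ≠ Φ since ranks differ
      intro h
      rw [h] at hrank
      rw [rankOf, hspan, finrank_top] at hrank
      omega
    · -- maximality among proper parabolics
      rintro Ψ' ⟨S, hSΦ, hΨ'⟩ hne' hsub'
      have hSne : Submodule.span ℚ S ≠ ⊤ := by
        intro h
        apply hne'
        rw [hΨ', h]
        simp
      have hrank' : rankOf Ψ' = r - 1 := by
        have hle : rankOf Ψ' < r := by
          rw [rankOf, hΨ', aux_span_inter hSΦ]
          exact hsub_lt hSne
        have hge : r - 1 ≤ rankOf Ψ' := by
          rw [← hrank]
          exact Submodule.finrank_mono (Submodule.span_mono hsub')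
        omega
      have hclosed' : IsClosedSub Φ Ψ' := by
        rw [hΨ']; exact aux_closed_of_inter Φ hneg _
      exact hmax _ hclosed' hrank' hsub'
  · rintro ⟨⟨S, hSΦ, hΨeq⟩, hne, hmax⟩
    have hΨsub : Ψ ⊆ Φ := by rw [hΨeq]; exact Set.inter_subset_right
    have hspanΨ : Submodule.span ℚ Ψ = Submodule.span ℚ S := by
      rw [hΨeq]; exact aux_span_inter hSΦ
    have hSne : Submodule.span ℚ S ≠ ⊤ := by
      intro h
      apply hne
      rw [hΨeq, h]
      simp
    -- any parabolic extension by a root outside span Ψ has full span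
    have hfull : ∀ α ∈ Φ, α ∉ Submodule.span ℚ Ψ → Submodule.span ℚ (Ψ ∪ {α}) = ⊤ := by
      intro α hα hαn
      by_contra htop
      have hS' : Ψ ∪ {α} ⊆ Φ := Set.union_subset hΨsub (by simpa using hα)
      have hpara' : IsParabolic Φ ((Submodule.span ℚ (Ψ ∪ {α}) : Set E) ∩ Φ) :=
        ⟨Ψ ∪ {α}, hS', rfl⟩
      have hne' : (Submodule.span ℚ (Ψ ∪ {α}) : Set E) ∩ Φ ≠ Φ := by
        intro h
        apply htop
        rw [eq_top_iff, ← hspan, Submodule.span_le]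
        intro x hx
        have hx2 : x ∈ (Submodule.span ℚ (Ψ ∪ {α}) : Set E) ∩ Φ := by rw [h]; exact hx
        exact hx2.1
      have hsub' : Ψ ⊆ (Submodule.span ℚ (Ψ ∪ {α}) : Set E) ∩ Φ := fun x hx =>
        ⟨Submodule.subset_span (Or.inl hx), hΨsub hx⟩
      have heq := hmax _ hpara' hne' hsub'
      have hαmem : α ∈ (Submodule.span ℚ (Ψ ∪ {α}) : Set E) ∩ Φ :=
        ⟨Submodule.subset_span (Or.inr rfl), hα⟩
      rw [heq] at hαmem
      exact hαn (Submodule.subset_span hαmem)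
    -- pick a root outside span Ψ
    obtain ⟨α, hαΦ, hαn⟩ : ∃ α ∈ Φ, α ∉ Submodule.span ℚ Ψ := by
      by_contra h
      push_neg at h
      apply hSne
      rw [← hspanΨ, eq_top_iff, ← hspan, Submodule.span_le]
      exact fun x hx => h x hx
    have hα0 : α ≠ 0 := fun h => h0 (h ▸ hαΦ)
    -- rank Ψ = r - 1
    have hrank : rankOf Ψ = r - 1 := by
      have hlt : rankOf Ψ < r := by
        rw [rankOf, hspanΨ]; exact hsub_lt hSne
      have hge : r ≤ rankOf Ψ + 1 := by
        have htop := hfull α hαΦ hαn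
        have hsup : Submodule.span ℚ (Ψ ∪ {α}) =
            Submodule.span ℚ Ψ ⊔ Submodule.span ℚ {α} := Submodule.span_union _ _
        have h1 : Module.finrank ℚ (Submodule.span ℚ ({α} : Set E)) = 1 := by
          simpa using finrank_span_singleton (K := ℚ) hα0
        calc r = Module.finrank ℚ (Submodule.span ℚ (Ψ ∪ {α})) := by
                rw [htop, finrank_top]
          _ ≤ Module.finrank ℚ (Submodule.span ℚ Ψ)
                + Module.finrank ℚ (Submodule.span ℚ ({α} : Set E)) := by
                rw [hsup]; exact Submodule.finrank_add_le_finrank_add_finrank _ _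
          _ = rankOf Ψ + 1 := by rw [h1, rankOf]
      omega
    refine ⟨by rw [hΨeq]; exact aux_closed_of_inter Φ hneg _, hrank, ?_⟩
    -- maximality among closed of rank r-1
    intro Ψ' hclosed' hrank' hsub'
    have hΨ'sub : Ψ' ⊆ Φ := hclosed'.1
    set Ψ₂ : Set E := (Submodule.span ℚ Ψ' : Set E) ∩ Φ with hΨ₂
    have hpara₂ : IsParabolic Φ Ψ₂ := ⟨Ψ', hΨ'sub, rfl⟩
    have hsp₂ : Submodule.span ℚ Ψ₂ = Submodule.span ℚ Ψ' := aux_span_inter hΨ'sub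
    have hne₂ : Ψ₂ ≠ Φ := by
      intro h
      have : Submodule.span ℚ Ψ' = ⊤ := by
        rw [eq_top_iff, ← hspan, Submodule.span_le]
        intro x hx
        have hx2 : x ∈ Ψ₂ := by rw [h]; exact hx
        exact hx2.1
      have : rankOf Ψ' = r := by rw [rankOf, this, finrank_top]
      omega
    have hsub₂ : Ψ ⊆ Ψ₂ := fun x hx =>
      ⟨Submodule.subset_span (hsub' hx), hΨsub hx⟩
    have heq := hmax _ hpara₂ hne₂ hsub₂
    have hΨ'Ψ₂ : Ψ' ⊆ Ψ₂ := fun x hx => ⟨Submodule.subset_span hx, hΨ'sub hx⟩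
    exact Set.Subset.antisymm (heq ▸ hΨ'Ψ₂) hsub'
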